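/- Fix $4\le r\le 7$ and let $d=9-r$. Under the orthogonal decomposition $N_r\otimes\mathbb{R} = \mathbb{R}K_r \oplus (K_r^\perp\otimes\mathbb{R})$, the exceptional classes in $N_r$ are exactly the elements $-\tfrac{1}{d}K_r + x$ where $x$ ranges over the Weyl group orbit $W\omega$ of the fundamental weight $\omega$ dual to the simple root $\beta_{r-1}=-\ell_{r-1}+\ell_r$ of the root system in $K_r^\perp$. -/
import Mathlib


/-- The bilinear form of `N_r`, extended to `N_r ⊗ ℝ`. -/
def NformR (r : ℕ) (x y : Fin (r + 1) → ℝ) : ℝ :=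
  ∑ i : Fin (r + 1), if i = 0 then x i * y i else -(x i * y i)

/-- `K_r ∈ N_r ⊗ ℝ`. -/
def KvecR (r : ℕ) : Fin (r + 1) → ℝ := fun i => if i = 0 then -3 else 1

/-- Integrality: membership in the lattice `N_r ⊂ N_r ⊗ ℝ`. -/
def IsIntegralVec (r : ℕ) (x : Fin (r + 1) → ℝ) : Prop := ∀ i, ∃ n : ℤ, x i = n

/-- The roots: lattice elements of `K_r^⊥` of square `-2`. -/
def RootsR (r : ℕ) : Set (Fin (r + 1) → ℝ) :=
  {b | IsIntegralVec r b ∧ NformR r b (KvecR r) = 0 ∧ NformR r b b = -2}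

/-- The reflection in a root `β` (note `(β,β) = -2`): `s_β(v) = v + (β,v)β`. -/
noncomputable def reflectR (r : ℕ) (b v : Fin (r + 1) → ℝ) : Fin (r + 1) → ℝ :=
  v + NformR r b v • b

/-- The orbit of `ω` under the Weyl group `W` generated by the reflections in
the roots: the smallest set containing `ω` and stable under all reflections. -/
def WOrbit (r : ℕ) (ω : Fin (r + 1) → ℝ) : Set (Fin (r + 1) → ℝ) :=
  ⋂₀ {S | ω ∈ S ∧ ∀ b ∈ RootsR r, ∀ v ∈ S, reflectR r b v ∈ S}

/-- The fundamental weight `ω` dual to the simple root `β_{r-1} = -ℓ_{r-1}+ℓ_r`: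
the orthogonal projection of `ℓ_r` to `K_r^⊥ ⊗ ℝ`, namely `ℓ_r + (1/d)K_r`. -/
noncomputable def omegaR (r : ℕ) : Fin (r + 1) → ℝ :=
  (fun i => if i = Fin.last r then 1 else 0) + (1 / (9 - (r : ℝ))) • KvecR r

section Aux

open Finset

variable {r : ℕ}

/- ### Bilinearity of the form -/

lemma NformR_symm (x y : Fin (r + 1) → ℝ) : NformR r x y = NformR r y x := by
  unfold NformR; apply Finset.sum_congr rfl; intros; split <;> ring

lemma NformR_add_right (x y z : Fin (r + 1) → ℝ) :
    NformR r x (y + z) = NformR r x y + NformR r x z := by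
  unfold NformR; rw [← Finset.sum_add_distrib]
  apply Finset.sum_congr rfl; intro i _
  simp only [Pi.add_apply]; split <;> ring

lemma NformR_smul_right (a : ℝ) (x y : Fin (r + 1) → ℝ) :
    NformR r x (a • y) = a * NformR r x y := by
  unfold NformR; rw [Finset.mul_sum]
  apply Finset.sum_congr rfl; intro i _
  simp only [Pi.smul_apply, smul_eq_mul]; split <;> ring

lemma NformR_add_left (x y z : Fin (r + 1) → ℝ) :
    NformR r (x + y) z = NformR r x z + NformR r y z := by
  rw [NformR_symm, NformR_add_right, NformR_symm z x, NformR_symm z y]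

lemma NformR_smul_left (a : ℝ) (x y : Fin (r + 1) → ℝ) :
    NformR r (a • x) y = a * NformR r x y := by
  rw [NformR_symm, NformR_smul_right, NformR_symm y x]

lemma NformR_single_left (p : Fin (r + 1)) (y : Fin (r + 1) → ℝ) :
    NformR r (Pi.single p 1) y = if p = 0 then y p else -(y p) := by
  unfold NformR
  rw [Finset.sum_eq_single p]
  · rw [Pi.single_eq_same]; split <;> ring
  · intro i _ hip
    rw [Pi.single_eq_of_ne hip]; split <;> ring
  · intro h; exact absurd (Finset.mem_univ p) h

/-- Expansion of `(x + a b, x + a b)`. -/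
lemma NformR_expand (a : ℝ) (x b : Fin (r + 1) → ℝ) :
    NformR r (x + a • b) (x + a • b) =
      NformR r x x + 2 * a * NformR r b x + a ^ 2 * NformR r b b := by
  rw [NformR_add_left, NformR_add_right, NformR_add_right, NformR_smul_left,
    NformR_smul_left, NformR_smul_right, NformR_smul_right, NformR_symm x b]
  ring

/- ### The form on the lattice -/

/-- The integral bilinear form. -/
def NformZ (r : ℕ) (x y : Fin (r + 1) → ℤ) : ℤ :=
  ∑ i : Fin (r + 1), if i = 0 then x i * y i else -(x i * y i)

lemma NformR_cast (gx gy : Fin (r + 1) → ℤ) :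
    NformR r (fun i => (gx i : ℝ)) (fun i => (gy i : ℝ)) = (NformZ r gx gy : ℝ) := by
  unfold NformR NformZ
  rw [Int.cast_sum]
  apply Finset.sum_congr rfl; intro i _
  split <;> push_cast <;> ring

lemma exists_int_rep (x : Fin (r + 1) → ℝ) (hx : IsIntegralVec r x) :
    ∃ g : Fin (r + 1) → ℤ, ∀ i, x i = (g i : ℝ) :=
  ⟨fun i => (hx i).choose, fun i => (hx i).choose_spec⟩

/-- The lattice vector `K_r`. -/
def KvecZ (r : ℕ) : Fin (r + 1) → ℤ := fun i => if i = 0 then -3 else 1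

lemma KvecR_cast : KvecR r = fun i => ((KvecZ r i : ℤ) : ℝ) := by
  funext i; unfold KvecR KvecZ; split <;> norm_num

/- ### Decomposition of the sum -/

lemma NformZ_eq (x y : Fin (r + 1) → ℤ) :
    NformZ r x y = x 0 * y 0 - ∑ i ∈ Finset.univ.erase (0 : Fin (r + 1)), x i * y i := by
  unfold NformZ
  rw [← Finset.add_sum_erase _ _ (Finset.mem_univ (0 : Fin (r + 1))), if_pos rfl,
    Finset.sum_congr rfl (fun i hi => if_neg (Finset.mem_erase.1 hi).1), Finset.sum_neg_distrib]
  ring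

lemma card_erase_zero : (Finset.univ.erase (0 : Fin (r + 1))).card = r := by
  rw [Finset.card_erase_of_mem (Finset.mem_univ _), Finset.card_univ, Fintype.card_fin]
  rfl

/-- The set of exceptional classes. -/
def ExcSet (r : ℕ) : Set (Fin (r + 1) → ℝ) :=
  {e | IsIntegralVec r e ∧ NformR r e e = -1 ∧ NformR r e (KvecR r) = -1}

/-- The canonical equations satisfied by the integral representative of
an exceptional class. -/
lemma exc_int_eqs {e : Fin (r + 1) → ℝ} (he : e ∈ ExcSet r)
    {g : Fin (r + 1) → ℤ} (hg : e = fun i => (g i : ℝ)) :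
    g 0 ^ 2 - (∑ i ∈ Finset.univ.erase (0 : Fin (r + 1)), g i ^ 2) = -1 ∧
      3 * g 0 + (∑ i ∈ Finset.univ.erase (0 : Fin (r + 1)), g i) = 1 := by
  obtain ⟨-, h1, h2⟩ := he
  rw [hg, NformR_cast] at h1
  rw [hg, KvecR_cast, NformR_cast] at h2
  have h1' : NformZ r g g = -1 := by exact_mod_cast h1
  have h2' : NformZ r g (KvecZ r) = -1 := by exact_mod_cast h2
  rw [NformZ_eq] at h1' h2'
  constructor
  · rw [← h1']; rw [Finset.sum_congr rfl (fun i _ => (sq (g i)).symm)]; ring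
  · have : (∑ i ∈ Finset.univ.erase (0 : Fin (r + 1)), g i * KvecZ r i) =
        ∑ i ∈ Finset.univ.erase (0 : Fin (r + 1)), g i := by
      apply Finset.sum_congr rfl; intro i hi
      unfold KvecZ; rw [if_neg (Finset.mem_erase.1 hi).1, mul_one]
    rw [this] at h2'
    unfold KvecZ at h2'
    rw [if_pos rfl] at h2'
    linarith

/- ### Combinatorial facts about exceptional classes -/

/-- The degree of an exceptional class is nonnegative (uses `r ≤ 7`). -/
lemma exc_deg_nonneg (h7 : r ≤ 7) {g : Fin (r + 1) → ℤ}
    (h1 : g 0 ^ 2 - (∑ i ∈ Finset.univ.erase (0 : Fin (r + 1)), g i ^ 2) = -1)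
    (h2 : 3 * g 0 + (∑ i ∈ Finset.univ.erase (0 : Fin (r + 1)), g i) = 1) :
    0 ≤ g 0 := by
  by_contra hneg
  push_neg at hneg
  have cs := sq_sum_le_card_mul_sum_sq (s := Finset.univ.erase (0 : Fin (r + 1))) (f := g)
  rw [card_erase_zero] at cs
  have hr : ((r : ℕ) : ℤ) ≤ 7 := by exact_mod_cast h7
  have hsqnn : (0 : ℤ) ≤ ∑ i ∈ Finset.univ.erase (0 : Fin (r + 1)), g i ^ 2 :=
    Finset.sum_nonneg fun i _ => sq_nonneg _
  nlinarith [sq_nonneg (g 0 + 1), sq_nonneg (g 0)]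

/-- If the degree is positive, all multiplicities `g p`, `p ≠ 0`, are `≤ 0`
(uses `r ≤ 7`). -/
lemma exc_entries_nonpos (h7 : r ≤ 7) {g : Fin (r + 1) → ℤ}
    (h1 : g 0 ^ 2 - (∑ i ∈ Finset.univ.erase (0 : Fin (r + 1)), g i ^ 2) = -1)
    (h2 : 3 * g 0 + (∑ i ∈ Finset.univ.erase (0 : Fin (r + 1)), g i) = 1)
    (ha : 1 ≤ g 0) {p : Fin (r + 1)} (hp : p ∈ Finset.univ.erase (0 : Fin (r + 1))) :
    g p ≤ 0 := by
  by_contra hpos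
  push_neg at hpos
  have hsum : g p + ∑ i ∈ (Finset.univ.erase (0 : Fin (r + 1))).erase p, g i =
      ∑ i ∈ Finset.univ.erase (0 : Fin (r + 1)), g i := Finset.add_sum_erase _ _ hp
  have hsumsq : g p ^ 2 + ∑ i ∈ (Finset.univ.erase (0 : Fin (r + 1))).erase p, g i ^ 2 =
      ∑ i ∈ Finset.univ.erase (0 : Fin (r + 1)), g i ^ 2 :=
    Finset.add_sum_erase _ (fun i => g i ^ 2) hp
  have cs := sq_sum_le_card_mul_sum_sq
    (s := (Finset.univ.erase (0 : Fin (r + 1))).erase p) (f := g)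
  have hcard : ((Finset.univ.erase (0 : Fin (r + 1))).erase p).card = r - 1 := by
    rw [Finset.card_erase_of_mem hp, card_erase_zero]
  rw [hcard] at cs
  have hr4 : 1 ≤ r := by
    rcases Nat.eq_zero_or_pos r with h | h
    · subst h
      exact absurd (Fin.fin_one_eq_zero p) (Finset.mem_erase.1 hp).1
    · exact h
  have hcard6 : ((r - 1 : ℕ) : ℤ) ≤ 6 := by
    have : r - 1 ≤ 6 := by omega
    exact_mod_cast this
  have hsqnn : (0 : ℤ) ≤ ∑ i ∈ (Finset.univ.erase (0 : Fin (r + 1))).erase p, g i ^ 2 :=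
    Finset.sum_nonneg fun i _ => sq_nonneg _
  nlinarith [sq_nonneg (g 0 - 1), sq_nonneg (g p - 1), mul_pos (lt_of_lt_of_le zero_lt_one ha) hpos]

/-- If the degree is positive, there are three distinct indices whose
multiplicities together with the degree sum to something negative. -/
lemma exc_exists_three (h4 : 4 ≤ r) (h7 : r ≤ 7) {g : Fin (r + 1) → ℤ}
    (h1 : g 0 ^ 2 - (∑ i ∈ Finset.univ.erase (0 : Fin (r + 1)), g i ^ 2) = -1)
    (h2 : 3 * g 0 + (∑ i ∈ Finset.univ.erase (0 : Fin (r + 1)), g i) = 1)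
    (ha : 1 ≤ g 0) :
    ∃ i j k : Fin (r + 1), i ≠ 0 ∧ j ≠ 0 ∧ k ≠ 0 ∧ i ≠ j ∧ i ≠ k ∧ j ≠ k ∧
      g 0 + g i + g j + g k ≤ -1 := by
  set A : Finset (Fin (r + 1)) := Finset.univ.erase 0 with hA
  have hAcard : A.card = r := card_erase_zero
  have hne1 : A.Nonempty := Finset.card_pos.1 (by omega)
  obtain ⟨i, hiA, hi⟩ := Finset.exists_min_image A g hne1
  have hne2 : (A.erase i).Nonempty := by
    apply Finset.card_pos.1
    rw [Finset.card_erase_of_mem hiA, hAcard]; omega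
  obtain ⟨j, hjA, hj⟩ := Finset.exists_min_image _ g hne2
  have hne3 : ((A.erase i).erase j).Nonempty := by
    apply Finset.card_pos.1
    rw [Finset.card_erase_of_mem hjA, Finset.card_erase_of_mem hiA, hAcard]; omega
  obtain ⟨k, hkA, hk⟩ := Finset.exists_min_image _ g hne3
  have hjA' : j ∈ A := (Finset.mem_erase.1 hjA).2
  have hkA' : k ∈ A := (Finset.mem_erase.1 (Finset.mem_erase.1 hkA).2).2
  refine ⟨i, j, k, (Finset.mem_erase.1 hiA).1, (Finset.mem_erase.1 hjA').1,
    (Finset.mem_erase.1 hkA').1, fun h => (Finset.mem_erase.1 hjA).1 h.symm,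
    fun h => (Finset.mem_erase.1 (Finset.mem_erase.1 hkA).2).1 h.symm,
    fun h => (Finset.mem_erase.1 hkA).1 h.symm, ?_⟩
  by_contra hcon
  push_neg at hcon
  have hcon' : 0 ≤ g 0 + g i + g j + g k := by omega
  -- decompositions of the sums
  have d1 : g i + ∑ m ∈ A.erase i, g m = ∑ m ∈ A, g m := Finset.add_sum_erase _ _ hiA
  have d2 : g j + ∑ m ∈ (A.erase i).erase j, g m = ∑ m ∈ A.erase i, g m :=
    Finset.add_sum_erase _ _ hjA
  have d3 : g k + ∑ m ∈ ((A.erase i).erase j).erase k, g m =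
      ∑ m ∈ (A.erase i).erase j, g m := Finset.add_sum_erase _ _ hkA
  set B := ((A.erase i).erase j).erase k with hB
  have hBcard : B.card = r - 3 := by
    rw [hB, Finset.card_erase_of_mem hkA, Finset.card_erase_of_mem hjA,
      Finset.card_erase_of_mem hiA, hAcard]
    omega
  -- every element of B is ≥ g k
  have hBsum : (B.card : ℤ) * g k ≤ ∑ m ∈ B, g m := by
    have := Finset.card_nsmul_le_sum B g (g k)
      (fun m hm => hk m (Finset.mem_erase.1 hm).2)
    rwa [nsmul_eq_mul] at this
  -- bounds
  have hij : g i ≤ g j := hi j hjA'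
  have hjk : g j ≤ g k := hj k (Finset.mem_erase.1 hkA).2
  have hk0 : g k ≤ 0 := exc_entries_nonpos h7 h1 h2 ha hkA'
  have hBcard' : ((B.card : ℕ) : ℤ) ≤ 4 := by
    rw [hBcard]
    have : r - 3 ≤ 4 := by omega
    exact_mod_cast this
  have hBge : (4 : ℤ) * g k ≤ ∑ m ∈ B, g m := by
    calc (4 : ℤ) * g k ≤ (B.card : ℤ) * g k := by nlinarith
    _ ≤ _ := hBsum
  have h3k : -g 0 ≤ 3 * g k := by omega
  -- conclude a = 1
  have ha1 : g 0 = 1 := by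
    have hS : ∑ m ∈ A, g m = 1 - 3 * g 0 := by omega
    omega
  -- now the refined analysis for degree 1
  have hsq1 : ∑ m ∈ A, g m ^ 2 = 2 := by omega
  -- g k = 0
  have hknn : g k = 0 := by
    by_contra hk1
    have hk1' : g k ≤ -1 := by omega
    have dsq1 : g i ^ 2 + ∑ m ∈ A.erase i, g m ^ 2 = ∑ m ∈ A, g m ^ 2 :=
      Finset.add_sum_erase _ (fun m => g m ^ 2) hiA
    have dsq2 : g j ^ 2 + ∑ m ∈ (A.erase i).erase j, g m ^ 2 =
        ∑ m ∈ A.erase i, g m ^ 2 := Finset.add_sum_erase _ (fun m => g m ^ 2) hjA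
    have dsq3 : g k ^ 2 + ∑ m ∈ B, g m ^ 2 = ∑ m ∈ (A.erase i).erase j, g m ^ 2 :=
      Finset.add_sum_erase _ (fun m => g m ^ 2) hkA
    have hBsqnn : (0 : ℤ) ≤ ∑ m ∈ B, g m ^ 2 := Finset.sum_nonneg fun m _ => sq_nonneg _
    nlinarith [sq_nonneg (g i + 1), sq_nonneg (g j + 1), sq_nonneg (g k + 1)]
  have hBnn : (0 : ℤ) ≤ ∑ m ∈ B, g m := by
    calc (0 : ℤ) = (B.card : ℤ) * g k := by rw [hknn, mul_zero]
    _ ≤ _ := hBsum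
  omega

/-- A degree-0 exceptional class is one of the `ℓ_p`. -/
lemma exc_deg_zero (h4 : 4 ≤ r) {g : Fin (r + 1) → ℤ}
    (h1 : g 0 ^ 2 - (∑ i ∈ Finset.univ.erase (0 : Fin (r + 1)), g i ^ 2) = -1)
    (h2 : 3 * g 0 + (∑ i ∈ Finset.univ.erase (0 : Fin (r + 1)), g i) = 1)
    (ha : g 0 = 0) :
    ∃ p : Fin (r + 1), p ≠ 0 ∧ ∀ m, g m = if m = p then 1 else 0 := by
  set A : Finset (Fin (r + 1)) := Finset.univ.erase 0 with hA
  have h0 : g 0 ^ 2 = 0 := by rw [ha]; ring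
  have hsq : ∑ i ∈ A, g i ^ 2 = 1 := by omega
  have hsum : ∑ i ∈ A, g i = 1 := by omega
  have hex : ∃ p ∈ A, g p ≠ 0 := by
    by_contra h
    push_neg at h
    rw [Finset.sum_eq_zero h] at hsum
    exact one_ne_zero hsum.symm
  obtain ⟨p, hpA, hp⟩ := hex
  have dsq : g p ^ 2 + ∑ m ∈ A.erase p, g m ^ 2 = ∑ m ∈ A, g m ^ 2 :=
    Finset.add_sum_erase _ (fun m => g m ^ 2) hpA
  have hp1 : 1 ≤ g p ^ 2 := by
    rcases lt_or_gt_of_ne hp with h | h <;> nlinarith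
  have hrest : ∑ m ∈ A.erase p, g m ^ 2 = 0 := by
    have : (0 : ℤ) ≤ ∑ m ∈ A.erase p, g m ^ 2 := Finset.sum_nonneg fun m _ => sq_nonneg _
    omega
  have hzero : ∀ m ∈ A.erase p, g m = 0 := by
    intro m hm
    have := (Finset.sum_eq_zero_iff_of_nonneg (fun m _ => sq_nonneg (g m))).1 hrest m hm
    exact pow_eq_zero_iff (by norm_num) |>.1 this
  have dsum : g p + ∑ m ∈ A.erase p, g m = ∑ m ∈ A, g m := Finset.add_sum_erase _ _ hpA
  rw [Finset.sum_eq_zero hzero] at dsum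
  have hgp : g p = 1 := by omega
  refine ⟨p, (Finset.mem_erase.1 hpA).1, fun m => ?_⟩
  by_cases hmp : m = p
  · rw [if_pos hmp, hmp, hgp]
  · rw [if_neg hmp]
    by_cases hm0 : m = 0
    · rw [hm0]; exact ha
    · exact hzero m (Finset.mem_erase.2 ⟨hmp, Finset.mem_erase.2 ⟨hm0, Finset.mem_univ m⟩⟩)

/- ### Reflections preserve exceptional classes -/

lemma reflect_mem_exc {b : Fin (r + 1) → ℝ} (hb : b ∈ RootsR r)
    {e : Fin (r + 1) → ℝ} (he : e ∈ ExcSet r) : reflectR r b e ∈ ExcSet r := by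
  obtain ⟨hbint, hbK, hbb⟩ := hb
  obtain ⟨heint, hee, heK⟩ := he
  have hsymm : NformR r e b = NformR r b e := NformR_symm e b
  refine ⟨?_, ?_, ?_⟩
  · -- integrality
    obtain ⟨gb, hgb⟩ := exists_int_rep b hbint
    obtain ⟨ge, hge⟩ := exists_int_rep e heint
    have hb' : b = fun i => (gb i : ℝ) := funext hgb
    have he' : e = fun i => (ge i : ℝ) := funext hge
    have ht : NformR r b e = (NformZ r gb ge : ℝ) := by rw [hb', he', NformR_cast]
    intro i
    refine ⟨ge i + NformZ r gb ge * gb i, ?_⟩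
    simp only [reflectR, Pi.add_apply, Pi.smul_apply, smul_eq_mul, ht, hge i, hgb i]
    push_cast
    ring
  · rw [reflectR, NformR_expand, hee, hbb, NformR_symm b e]
    ring
  · rw [reflectR, NformR_add_left, NformR_smul_left, hbK, heK]
    ring

lemma NformR_sub_left (x y z : Fin (r + 1) → ℝ) :
    NformR r (x - y) z = NformR r x z - NformR r y z := by
  unfold NformR; rw [← Finset.sum_sub_distrib]
  apply Finset.sum_congr rfl; intro i _
  simp only [Pi.sub_apply]; split <;> ring

lemma exc_deg_nonneg' (h7 : r ≤ 7) {e : Fin (r + 1) → ℝ} (he : e ∈ ExcSet r) :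
    0 ≤ e 0 := by
  obtain ⟨g, hg⟩ := exists_int_rep e he.1
  obtain ⟨h1, h2⟩ := exc_int_eqs he (funext hg)
  rw [hg 0]
  exact_mod_cast exc_deg_nonneg h7 h1 h2

lemma last_ne_zero (h4 : 4 ≤ r) : (Fin.last r) ≠ (0 : Fin (r + 1)) := by
  rw [Fin.ne_iff_vne, Fin.val_last, Fin.val_zero]
  omega

/-- Transitivity of the Weyl group on exceptional classes: any set containing
`ℓ_r` and stable under all the reflections contains every exceptional class. -/
lemma key_trans (h4 : 4 ≤ r) (h7 : r ≤ 7) (T : Set (Fin (r + 1) → ℝ))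
    (hl : (fun i => if i = Fin.last r then (1 : ℝ) else 0) ∈ T)
    (hstab : ∀ b ∈ RootsR r, ∀ v ∈ T, reflectR r b v ∈ T) :
    ∀ n : ℕ, ∀ e ∈ ExcSet r, e 0 = (n : ℝ) → e ∈ T := by
  intro n
  induction n using Nat.strong_induction_on with
  | _ n ih =>
    intro e he h0
    obtain ⟨ge, hge⟩ := exists_int_rep e he.1
    have he' : e = fun i => (ge i : ℝ) := funext hge
    obtain ⟨h1, h2⟩ := exc_int_eqs he he'
    have hg0 : ge 0 = (n : ℤ) := by
      have h := hge 0
      rw [h0] at h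
      exact_mod_cast h.symm
    rcases Nat.eq_zero_or_pos n with hn0 | hnpos
    · -- degree zero : `e = ℓ_p`
      obtain ⟨p, hp0, hgp⟩ := exc_deg_zero h4 h1 h2 (by omega)
      have hep : e = fun i => if i = p then (1 : ℝ) else 0 := by
        rw [he']; funext m; rw [hgp m]; split <;> norm_num
      by_cases hpl : p = Fin.last r
      · rw [hep, hpl]; exact hl
      · set β : Fin (r + 1) → ℝ := Pi.single p 1 - Pi.single (Fin.last r) 1 with hβ
        have hlz := last_ne_zero h4
        have hβform : ∀ y : Fin (r + 1) → ℝ,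
            NformR r β y = -(y p) + y (Fin.last r) := by
          intro y
          rw [hβ, NformR_sub_left, NformR_single_left, NformR_single_left,
            if_neg hp0, if_neg hlz]
          ring
        have hβroot : β ∈ RootsR r := by
          refine ⟨fun m => ?_, ?_, ?_⟩
          · refine ⟨(if m = p then 1 else 0) - (if m = Fin.last r then 1 else 0), ?_⟩
            simp only [hβ, Pi.sub_apply, Pi.single_apply]
            split_ifs <;> norm_num
          · rw [hβform]
            simp [KvecR, hp0, hlz]
          · rw [hβform]
            simp only [hβ, Pi.sub_apply, Pi.single_apply, if_pos rfl, if_neg hpl,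
              if_neg (fun h : Fin.last r = p => hpl h.symm)]
            norm_num
        have ht : NformR r β (fun i => if i = Fin.last r then (1 : ℝ) else 0) = 1 := by
          rw [hβform]
          simp [hpl]
        have hrefl : reflectR r β (fun i => if i = Fin.last r then (1 : ℝ) else 0) = e := by
          rw [reflectR, ht, one_smul, hep]
          funext m
          simp only [Pi.add_apply, hβ, Pi.sub_apply, Pi.single_apply]
          by_cases h1m : m = p
          · subst h1m
            simp [hpl]
          · by_cases h2m : m = Fin.last r
            · subst h2m
              simp [fun h : Fin.last r = p => hpl h.symm, h1m]
            · simp [h1m, h2m]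
        rw [← hrefl]
        exact hstab β hβroot _ hl
    · -- positive degree : apply a Cremona-type reflection and induct
      have ha : 1 ≤ ge 0 := by omega
      obtain ⟨i, j, k, hi0, hj0, hk0, hij, hik, hjk, hsum⟩ :=
        exc_exists_three h4 h7 h1 h2 ha
      set β : Fin (r + 1) → ℝ :=
        Pi.single 0 1 - Pi.single i 1 - Pi.single j 1 - Pi.single k 1 with hβ
      have hβform : ∀ y : Fin (r + 1) → ℝ,
          NformR r β y = y 0 + y i + y j + y k := by
        intro y
        rw [hβ, NformR_sub_left, NformR_sub_left, NformR_sub_left, NformR_single_left,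
          NformR_single_left, NformR_single_left, NformR_single_left,
          if_pos rfl, if_neg hi0, if_neg hj0, if_neg hk0]
        ring
      have hβroot : β ∈ RootsR r := by
        refine ⟨fun m => ?_, ?_, ?_⟩
        · refine ⟨(if m = 0 then 1 else 0) - (if m = i then 1 else 0)
            - (if m = j then 1 else 0) - (if m = k then 1 else 0), ?_⟩
          simp only [hβ, Pi.sub_apply, Pi.single_apply]
          split_ifs <;> norm_num
        · rw [hβform]
          simp only [KvecR, if_pos rfl, if_neg hi0, if_neg hj0, if_neg hk0]
          norm_num
        · rw [hβform]
          simp only [hβ, Pi.sub_apply, Pi.single_apply, if_pos rfl,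
            if_neg hi0, if_neg hj0, if_neg hk0,
            if_neg (Ne.symm hi0), if_neg (Ne.symm hj0), if_neg (Ne.symm hk0),
            if_neg hij, if_neg hik, if_neg hjk,
            if_neg (Ne.symm hij), if_neg (Ne.symm hik), if_neg (Ne.symm hjk)]
          norm_num
      have ht : NformR r β e = ((ge 0 + ge i + ge j + ge k : ℤ) : ℝ) := by
        rw [hβform, hge 0, hge i, hge j, hge k]
        push_cast
        ring
      set t : ℤ := ge 0 + ge i + ge j + ge k with htdef
      have he'exc : reflectR r β e ∈ ExcSet r := reflect_mem_exc hβroot he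
      have hβ0 : β 0 = 1 := by
        simp only [hβ, Pi.sub_apply, Pi.single_apply, if_pos rfl,
          if_neg (Ne.symm hi0), if_neg (Ne.symm hj0), if_neg (Ne.symm hk0)]
        norm_num
      have he'0 : reflectR r β e 0 = ((ge 0 + t : ℤ) : ℝ) := by
        rw [reflectR, Pi.add_apply, Pi.smul_apply, smul_eq_mul, ht, hβ0, hge 0]
        push_cast
        ring
      have ha' : (0 : ℤ) ≤ ge 0 + t := by
        have := exc_deg_nonneg' h7 he'exc
        rw [he'0] at this
        exact_mod_cast this
      set m : ℕ := (ge 0 + t).toNat with hm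
      have hmz : ((m : ℕ) : ℤ) = ge 0 + t := Int.toNat_of_nonneg ha'
      have hmn : m < n := by omega
      have he'T : reflectR r β e ∈ T := by
        apply ih m hmn _ he'exc
        rw [he'0]
        exact_mod_cast congrArg (fun z : ℤ => (z : ℝ)) hmz.symm
      have hback : reflectR r β (reflectR r β e) = e := by
        have hb2 : NformR r β (reflectR r β e) = -NformR r β e := by
          rw [reflectR, NformR_add_right, NformR_smul_right, hβroot.2.2]
          ring
        rw [reflectR, hb2, reflectR, add_assoc, ← add_smul, add_neg_cancel,
          zero_smul, add_zero]
      rw [← hback]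
      exact hstab β hβroot _ he'T

/-- `ℓ_r` is an exceptional class. -/
lemma lvec_mem_exc (h4 : 4 ≤ r) :
    (fun i => if i = Fin.last r then (1 : ℝ) else 0) ∈ ExcSet r := by
  have hlz := last_ne_zero h4
  have hls : (fun i => if i = Fin.last r then (1 : ℝ) else 0) = Pi.single (Fin.last r) 1 := by
    funext i
    rw [Pi.single_apply]
  refine ⟨fun i => ?_, ?_, ?_⟩
  · by_cases h : i = Fin.last r
    · exact ⟨1, by simp [h]⟩
    · exact ⟨0, by simp [h]⟩
  · rw [hls, NformR_single_left, if_neg hlz, Pi.single_eq_same]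
  · rw [hls, NformR_single_left, if_neg hlz]
    simp only [KvecR, if_neg hlz]

/-- Translation by a multiple of `K` commutes with the reflections. -/
lemma translate_reflect {b : Fin (r + 1) → ℝ} (hb : b ∈ RootsR r) (c : ℝ)
    (x : Fin (r + 1) → ℝ) :
    c • KvecR r + reflectR r b x = reflectR r b (c • KvecR r + x) := by
  have h : NformR r b (c • KvecR r + x) = NformR r b x := by
    rw [NformR_add_right, NformR_smul_right, hb.2.1]
    ring
  rw [reflectR, reflectR, h, add_assoc]

end Aux

/-- Under `N_r ⊗ ℝ = ℝK_r ⊕ (K_r^⊥ ⊗ ℝ)`, the exceptional classes of `N_r` are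
exactly the elements `-(1/d)K_r + x` with `x ∈ Wω`, `d = 9 - r`. -/
theorem exceptional_classes_eq_orbit (r : ℕ) (h4 : 4 ≤ r) (h7 : r ≤ 7) :
    {e : Fin (r + 1) → ℝ | IsIntegralVec r e ∧
        NformR r e e = -1 ∧ NformR r e (KvecR r) = -1} =
      (fun x => (-(1 / (9 - (r : ℝ)))) • KvecR r + x) '' WOrbit r (omegaR r) := by
  have hphiomega : (-(1 / (9 - (r : ℝ)))) • KvecR r + omegaR r =
      fun i => if i = Fin.last r then (1 : ℝ) else 0 := by
    rw [omegaR]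
    module
  ext e
  constructor
  · -- exceptional ⟹ in the image
    intro he
    refine ⟨e + (1 / (9 - (r : ℝ))) • KvecR r, ?_, by module⟩
    intro S hS
    obtain ⟨hω, hstab⟩ := hS
    -- transport everything through the translation
    set T : Set (Fin (r + 1) → ℝ) :=
      (fun u => (-(1 / (9 - (r : ℝ)))) • KvecR r + u) '' S with hT
    have hlT : (fun i => if i = Fin.last r then (1 : ℝ) else 0) ∈ T :=
      ⟨omegaR r, hω, hphiomega⟩
    have hstabT : ∀ b ∈ RootsR r, ∀ v ∈ T, reflectR r b v ∈ T := by
      rintro b hb v ⟨u, hu, rfl⟩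
      exact ⟨reflectR r b u, hstab b hb u hu, translate_reflect hb _ u⟩
    have heT : e ∈ T := by
      obtain ⟨g, hg⟩ := exists_int_rep e he.1
      obtain ⟨h1, h2⟩ := exc_int_eqs he (funext hg)
      have hnn : (0 : ℤ) ≤ g 0 := exc_deg_nonneg h7 h1 h2
      refine key_trans h4 h7 T hlT hstabT (g 0).toNat e he ?_
      rw [hg 0]
      exact_mod_cast (Int.toNat_of_nonneg hnn).symm
    obtain ⟨u, hu, hue⟩ := heT
    have : e + (1 / (9 - (r : ℝ))) • KvecR r = u := by
      rw [← hue]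
      module
    rwa [this]
  · -- in the image ⟹ exceptional
    rintro ⟨x, hx, rfl⟩
    have hS : (fun u => (-(1 / (9 - (r : ℝ)))) • KvecR r + u) ⁻¹' ExcSet r ∈
        {S | omegaR r ∈ S ∧ ∀ b ∈ RootsR r, ∀ v ∈ S, reflectR r b v ∈ S} := by
      constructor
      · show (-(1 / (9 - (r : ℝ)))) • KvecR r + omegaR r ∈ ExcSet r
        rw [hphiomega]
        exact lvec_mem_exc h4
      · intro b hb v hv
        show (-(1 / (9 - (r : ℝ)))) • KvecR r + reflectR r b v ∈ ExcSet r
        rw [translate_reflect hb]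
        exact reflect_mem_exc hb hv
    exact hx _ hS
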